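/- Let n = 4. Then a_0 = 1, a_1 = 0, a_2 = 1, a_3 = 0, and the dimensions satisfy the linear recurrence a_{m+2} = 4·a_m for every integer m ≥ 1. (Equivalently, the Hilbert series of ℂ⟨u,v⟩^{D_8} is (1−3t²)/(1−4t²).) -/

import Mathlib

open scoped Real

noncomputable section

/-- Words in two letters. -/
abbrev FW := FreeMonoid (Fin 2)

/-- The free associative unital ℂ-algebra on two generators. -/
abbrev FA := MonoidAlgebra ℂ FW

/-- The generator `u`. -/
def gu : FA := MonoidAlgebra.of ℂ FW (FreeMonoid.of 0)

/-- The generator `v`. -/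
def gv : FA := MonoidAlgebra.of ℂ FW (FreeMonoid.of 1)

/-- The algebra endomorphism `ρ` with `ρ(u) = ξ u`, `ρ(v) = ξ⁻¹ v`, `ξ = exp(2πi/n)`. -/
def dRho (n : ℕ) : FA →ₐ[ℂ] FA :=
  MonoidAlgebra.lift ℂ FA FW
    (FreeMonoid.lift fun i : Fin 2 =>
      if i = 0 then Complex.exp (2 * Real.pi * Complex.I / n) • gu
      else (Complex.exp (2 * Real.pi * Complex.I / n))⁻¹ • gv)

/-- The algebra endomorphism `τ` exchanging `u` and `v`. -/
def dTau : FA →ₐ[ℂ] FA :=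
  MonoidAlgebra.lift ℂ FA FW
    (FreeMonoid.lift fun i : Fin 2 => if i = 0 then gv else gu)

/-- The invariant algebra `ℂ⟨u,v⟩^{D_{2n}}`. -/
def invAlg (n : ℕ) : Subalgebra ℂ FA :=
  AlgHom.equalizer (dRho n) (AlgHom.id ℂ FA) ⊓ AlgHom.equalizer dTau (AlgHom.id ℂ FA)

/-- The degree-`j` homogeneous component of `ℂ⟨u,v⟩`: the span of words of length `j`. -/
def degComp (j : ℕ) : Submodule ℂ FA :=
  MonoidAlgebra.supported ℂ ℂ {w : FW | FreeMonoid.length w = j}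

/-- `a_j`: the dimension of the degree-`j` homogeneous component of the invariant algebra. -/
def aDim (n j : ℕ) : ℕ :=
  Module.finrank ℂ ↥((invAlg n).toSubmodule ⊓ degComp j)

-- ξ for n = 4 is I
lemma xi4 : Complex.exp (2 * Real.pi * Complex.I / (4:ℕ)) = Complex.I := by
  have : (2 * Real.pi * Complex.I / (4:ℕ)) = (↑(Real.pi/2) : ℂ) * Complex.I := by
    push_cast; ring
  rw [this, Complex.exp_mul_I, ← Complex.ofReal_cos, ← Complex.ofReal_sin,
    Real.cos_pi_div_two, Real.sin_pi_div_two]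
  simp

/-- weight of a word -/
def wt (w : FW) : ℕ := w.toList.count 0 + 3 * w.toList.count 1

/-- letter swap -/
def sw : Fin 2 → Fin 2 := fun i => if i = 0 then 1 else 0

def swapW (w : FW) : FW := FreeMonoid.map sw w

lemma sw_sw (i : Fin 2) : sw (sw i) = i := by fin_cases i <;> simp [sw]

lemma swapW_swapW (w : FW) : swapW (swapW w) = w := by
  have : FreeMonoid.toList (swapW (swapW w)) = FreeMonoid.toList w := by
    simp only [swapW, FreeMonoid.toList_map, List.map_map]
    rw [show sw ∘ sw = id from funext sw_sw, List.map_id]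
  exact FreeMonoid.toList.injective this

lemma toList_swapW (w : FW) : (swapW w).toList = w.toList.map sw := FreeMonoid.toList_map _ _

def wtl (l : List (Fin 2)) : ℕ := l.count 0 + 3 * l.count 1

lemma wt_eq (w : FW) : wt w = wtl w.toList := rfl

lemma prod_map_f (l : List (Fin 2)) :
    (l.map (fun i : Fin 2 =>
      if i = 0 then Complex.exp (2 * Real.pi * Complex.I / (4:ℕ)) • gu
      else (Complex.exp (2 * Real.pi * Complex.I / (4:ℕ)))⁻¹ • gv)).prod
      = Complex.I ^ wtl l • MonoidAlgebra.single (FreeMonoid.ofList l) (1:ℂ) := by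
  induction l with
  | nil => simp [wtl, FreeMonoid.ofList]; rfl
  | cons a l ih =>
    rw [List.map_cons, List.prod_cons, ih]
    have hIinv : (Complex.I)⁻¹ = Complex.I ^ (3:ℕ) := by
      rw [Complex.inv_I]; simp [pow_succ, Complex.I_sq]
    have hstep : ∀ (k : ℕ),
        (Complex.I ^ k • MonoidAlgebra.single (FreeMonoid.of a) (1:ℂ)) *
          (Complex.I ^ wtl l • MonoidAlgebra.single (FreeMonoid.ofList l) (1:ℂ))
        = Complex.I ^ (k + wtl l) • MonoidAlgebra.single (FreeMonoid.ofList (a :: l)) (1:ℂ) := by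
      intro k
      rw [smul_mul_smul_comm, MonoidAlgebra.single_mul_single, one_mul, pow_add,
        FreeMonoid.ofList_cons]
    have h01 : ∀ b : Fin 2, b = 0 ∨ b = 1 := by decide
    rcases h01 a with rfl | rfl
    · rw [if_pos rfl, xi4]
      have := hstep 1
      rw [pow_one] at this
      rw [show gu = MonoidAlgebra.single (FreeMonoid.of (0:Fin 2)) (1:ℂ) from rfl]
      rw [this]
      congr 2
      simp [wtl, List.count_cons]
      try omega
    · rw [if_neg (by decide), xi4, hIinv]
      rw [show gv = MonoidAlgebra.single (FreeMonoid.of (1:Fin 2)) (1:ℂ) from rfl]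
      rw [hstep 3]
      congr 2
      simp [wtl, List.count_cons]
      try omega

lemma dRho4_single (w : FW) (c : ℂ) :
    dRho 4 (MonoidAlgebra.single w c) = MonoidAlgebra.single w (Complex.I ^ wt w * c) := by
  rw [show (MonoidAlgebra.single w c : FA) = c • MonoidAlgebra.single w 1 by
    rw [MonoidAlgebra.smul_single', mul_one]]
  rw [map_smul]
  rw [dRho, MonoidAlgebra.lift_single, FreeMonoid.lift_apply, prod_map_f]
  rw [← wt_eq, FreeMonoid.ofList_toList]
  simp [Finsupp.smul_single, smul_eq_mul, mul_comm]

lemma prod_map_g (l : List (Fin 2)) :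
    (l.map (fun i : Fin 2 => if i = 0 then gv else gu)).prod
      = MonoidAlgebra.single (FreeMonoid.ofList (l.map sw)) (1:ℂ) := by
  induction l with
  | nil => rfl
  | cons a l ih =>
    rw [List.map_cons, List.prod_cons, ih]
    have h01 : ∀ b : Fin 2, b = 0 ∨ b = 1 := by decide
    rcases h01 a with rfl | rfl
    · rw [if_pos rfl, show gv = MonoidAlgebra.single (FreeMonoid.of (1:Fin 2)) (1:ℂ) from rfl,
        MonoidAlgebra.single_mul_single, one_mul]
      rfl
    · rw [if_neg (by decide), show gu = MonoidAlgebra.single (FreeMonoid.of (0:Fin 2)) (1:ℂ) from rfl,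
        MonoidAlgebra.single_mul_single, one_mul]
      rfl

lemma dTau_single (w : FW) (c : ℂ) :
    dTau (MonoidAlgebra.single w c) = MonoidAlgebra.single (swapW w) c := by
  rw [show (MonoidAlgebra.single w c : FA) = c • MonoidAlgebra.single w 1 by
    rw [MonoidAlgebra.smul_single', mul_one]]
  rw [map_smul, dTau, MonoidAlgebra.lift_single, FreeMonoid.lift_apply, prod_map_g]
  have : FreeMonoid.ofList (FreeMonoid.toList w |>.map sw) = swapW w := by
    simp [swapW, FreeMonoid.toList_map]
    rfl
  rw [this, one_smul, MonoidAlgebra.smul_single', mul_one]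

lemma dRho4_apply (f : FA) (w : FW) : (dRho 4 f).coeff w = Complex.I ^ wt w * f.coeff w := by
  classical
  induction f using MonoidAlgebra.induction_linear with
  | zero => simp
  | add f g hf hg =>
    rw [map_add, MonoidAlgebra.coeff_add, Finsupp.add_apply, hf, hg, MonoidAlgebra.coeff_add, Finsupp.add_apply]; ring
  | single w' c =>
    rw [dRho4_single]
    simp only [MonoidAlgebra.coeff_single]
    rw [Finsupp.single_apply, Finsupp.single_apply]
    by_cases h : w' = w
    · subst h; simp
    · simp [h]

lemma dTau_apply (f : FA) (w : FW) : (dTau f).coeff w = f.coeff (swapW w) := by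
  classical
  induction f using MonoidAlgebra.induction_linear with
  | zero => simp
  | add f g hf hg =>
    rw [map_add, MonoidAlgebra.coeff_add, Finsupp.add_apply, hf, hg, MonoidAlgebra.coeff_add, Finsupp.add_apply]
  | single w' c =>
    rw [dTau_single]
    simp only [MonoidAlgebra.coeff_single]
    rw [Finsupp.single_apply, Finsupp.single_apply]
    by_cases h : swapW w' = w
    · rw [if_pos h, if_pos]
      rw [← h, swapW_swapW]
    · rw [if_neg h, if_neg]
      intro hc
      exact h (by rw [hc, swapW_swapW])

lemma I_pow_eq_one_iff (k : ℕ) : Complex.I ^ k = 1 ↔ k % 4 = 0 := by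
  have hdm : k = 4 * (k / 4) + k % 4 := (Nat.div_add_mod k 4).symm
  have h1 : Complex.I ^ k = Complex.I ^ (k % 4) := by
    conv_lhs => rw [hdm]
    rw [pow_add, pow_mul, Complex.I_pow_four, one_pow, one_mul]
  rw [h1]
  have h4 : k % 4 < 4 := Nat.mod_lt _ (by norm_num)
  interval_cases h : k % 4 <;> simp [pow_succ, Complex.I_sq, Complex.ext_iff] <;> norm_num

lemma mem_M_iff (j : ℕ) (f : FA) :
    f ∈ (invAlg 4).toSubmodule ⊓ degComp j ↔
      (∀ w : FW, f.coeff w ≠ 0 → FreeMonoid.length w = j) ∧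
      (∀ w : FW, f.coeff w ≠ 0 → wt w % 4 = 0) ∧
      (∀ w : FW, f.coeff (swapW w) = f.coeff w) := by
  rw [Submodule.mem_inf]
  have h1 : f ∈ (invAlg 4).toSubmodule ↔ dRho 4 f = f ∧ dTau f = f := by
    simp [invAlg, Subalgebra.mem_toSubmodule, Algebra.mem_inf, AlgHom.mem_equalizer]
  have h2 : f ∈ degComp j ↔ ∀ w : FW, f.coeff w ≠ 0 → FreeMonoid.length w = j := by
    rw [degComp, MonoidAlgebra.mem_supported']
    constructor
    · intro h w hw
      by_contra hlen
      exact hw (h w hlen)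
    · intro h w hw
      by_contra hfw
      exact hw (h w hfw)
  have h3 : dRho 4 f = f ↔ ∀ w : FW, f.coeff w ≠ 0 → wt w % 4 = 0 := by
    rw [← MonoidAlgebra.coeff_inj, Finsupp.ext_iff]
    constructor
    · intro h w hw
      have hc := h w
      rw [dRho4_apply] at hc
      rw [← I_pow_eq_one_iff]
      have h' : (Complex.I ^ wt w - 1) * f.coeff w = 0 := by
        rw [sub_mul, one_mul, hc, sub_self]
      rcases mul_eq_zero.1 h' with h'' | h''
      · exact sub_eq_zero.1 h''
      · exact absurd h'' hw
    · intro h w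
      rw [dRho4_apply]
      by_cases hw : f.coeff w = 0
      · rw [hw, mul_zero]
      · rw [(I_pow_eq_one_iff _).2 (h w hw), one_mul]
  have h4 : dTau f = f ↔ ∀ w : FW, f.coeff (swapW w) = f.coeff w := by
    rw [← MonoidAlgebra.coeff_inj, Finsupp.ext_iff]
    constructor
    · intro h w
      have hc := h (swapW w)
      rw [dTau_apply, swapW_swapW] at hc
      exact hc.symm
    · intro h w
      rw [dTau_apply, ← h, swapW_swapW]
  rw [h1, h2, h3, h4]
  tauto

def allW : ℕ → Finset (List (Fin 2))
  | 0 => {[]}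
  | j+1 => (allW j).image (List.cons 0) ∪ (allW j).image (List.cons 1)

lemma mem_allW {j : ℕ} {l : List (Fin 2)} : l ∈ allW j ↔ l.length = j := by
  induction j generalizing l with
  | zero => simp [allW, List.length_eq_zero_iff]
  | succ j ih =>
    simp only [allW, Finset.mem_union, Finset.mem_image]
    constructor
    · rintro (⟨l', hl', rfl⟩ | ⟨l', hl', rfl⟩) <;> simp [ih.1 hl']
    · intro hl
      rcases l with _ | ⟨a, l⟩
      · simp at hl
      · have hl' : l.length = j := by simpa using hl
        have h01 : ∀ b : Fin 2, b = 0 ∨ b = 1 := by decide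
        rcases h01 a with rfl | rfl
        · exact Or.inl ⟨l, ih.2 hl', rfl⟩
        · exact Or.inr ⟨l, ih.2 hl', rfl⟩

def cnt (j r : ℕ) : ℕ := ((allW j).filter (fun l => wtl l % 4 = r)).card

lemma wtl_cons (a : Fin 2) (l : List (Fin 2)) :
    wtl (a :: l) = wtl l + (if a = 0 then 1 else 3) := by
  have h01 : ∀ b : Fin 2, b = 0 ∨ b = 1 := by decide
  rcases h01 a with rfl | rfl <;> simp [wtl, List.count_cons] <;> omega

lemma cons_inj (a : Fin 2) : Function.Injective (List.cons a) := fun x y h => by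
  simpa using h

lemma cnt_succ (j r : ℕ) (hr : r < 4) :
    cnt (j+1) r = cnt j ((r+3)%4) + cnt j ((r+1)%4) := by
  have hdisj : Disjoint ((allW j).image (List.cons 0)) ((allW j).image (List.cons 1)) := by
    rw [Finset.disjoint_left]
    rintro l hl0 hl1
    simp only [Finset.mem_image] at hl0 hl1
    obtain ⟨x, _, rfl⟩ := hl0
    obtain ⟨y, _, h⟩ := hl1
    simpa using congrArg List.head? h
  rw [cnt, show allW (j+1) = (allW j).image (List.cons 0) ∪ (allW j).image (List.cons 1) from rfl,
    Finset.filter_union, Finset.card_union_of_disjoint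
      (Finset.disjoint_filter_filter hdisj),
    Finset.filter_image, Finset.filter_image,
    Finset.card_image_of_injective _ (cons_inj 0),
    Finset.card_image_of_injective _ (cons_inj 1)]
  congr 1
  · rw [cnt]
    congr 1
    apply Finset.filter_congr
    intro l _
    rw [wtl_cons]
    norm_num
    constructor <;> intro h <;> omega
  · rw [cnt]
    congr 1
    apply Finset.filter_congr
    intro l _
    rw [wtl_cons]
    norm_num
    constructor <;> intro h <;> omega

lemma cnt_zero : cnt 0 0 = 1 ∧ cnt 0 1 = 0 ∧ cnt 0 2 = 0 ∧ cnt 0 3 = 0 := by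
  refine ⟨?_, ?_, ?_, ?_⟩ <;> rfl

lemma cnt_one_three (j : ℕ) : cnt j 1 = cnt j 3 := by
  rcases j with _ | j
  · rw [cnt_zero.2.1, cnt_zero.2.2.2]
  · rw [cnt_succ j 1 (by norm_num), cnt_succ j 3 (by norm_num)]
    norm_num
    omega

lemma cnt_zero_two (j : ℕ) : cnt (j+1) 0 = cnt (j+1) 2 := by
  rw [cnt_succ j 0 (by norm_num), cnt_succ j 2 (by norm_num)]
  norm_num
  omega

lemma cnt_rec (k : ℕ) : cnt (k+3) 3 = 4 * cnt (k+1) 3 := by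
  rw [cnt_succ (k+2) 3 (by norm_num)]
  norm_num
  rw [← cnt_zero_two (k+1), cnt_succ (k+1) 0 (by norm_num)]
  norm_num
  rw [cnt_one_three]
  omega

def Tfin (j : ℕ) : Finset (List (Fin 2)) :=
  (allW j).filter (fun l => wtl l % 4 = 0 ∧ l.head? = some 0)

lemma Tfin_card (j : ℕ) : (Tfin (j+1)).card = cnt j 3 := by
  have : Tfin (j+1) = ((allW j).filter (fun l => wtl l % 4 = 3)).image (List.cons 0) := by
    ext l
    simp only [Tfin, Finset.mem_filter, Finset.mem_image, mem_allW]
    constructor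
    · rintro ⟨hlen, hwt, hhd⟩
      rcases l with _ | ⟨a, l⟩
      · simp at hhd
      · have ha : a = 0 := by simpa using hhd
        subst ha
        refine ⟨l, ⟨by simpa using hlen, ?_⟩, rfl⟩
        rw [wtl_cons, if_pos rfl] at hwt
        omega
    · rintro ⟨l', ⟨hlen, hwt⟩, rfl⟩
      refine ⟨by simpa using hlen, ?_, rfl⟩
      rw [wtl_cons, if_pos rfl]
      omega
  rw [this, Finset.card_image_of_injective _ (cons_inj 0), cnt]

lemma swapW_injective : Function.Injective swapW :=
  Function.LeftInverse.injective swapW_swapW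

lemma wt_swapW (w : FW) : wt (swapW w) = w.toList.count 1 + 3 * w.toList.count 0 := by
  have hsw : Function.Injective sw := Function.LeftInverse.injective sw_sw
  have c0 : (w.toList.map sw).count 0 = w.toList.count 1 := by
    have := List.count_map_of_injective w.toList sw hsw 1
    simpa [sw] using this
  have c1 : (w.toList.map sw).count 1 = w.toList.count 0 := by
    have := List.count_map_of_injective w.toList sw hsw 0
    simpa [sw] using this
  rw [show wt (swapW w) = (swapW w).toList.count 0 + 3 * (swapW w).toList.count 1 from rfl,
    toList_swapW, c0, c1]

lemma wt_swapW_mod (w : FW) : wt (swapW w) % 4 = 0 ↔ wt w % 4 = 0 := by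
  rw [wt_swapW, show wt w = w.toList.count 0 + 3 * w.toList.count 1 from rfl]
  omega

lemma length_swapW (w : FW) : (swapW w).toList.length = w.toList.length := by
  rw [toList_swapW, List.length_map]

lemma aDim_succ (j : ℕ) : aDim 4 (j+1) = cnt j 3 := by
  classical
  set Ts : Set FW := {w : FW | w.toList ∈ Tfin (j+1)} with hTs
  have memTs : ∀ w : FW, w ∈ Ts ↔
      (w.toList.length = j+1 ∧ wt w % 4 = 0 ∧ w.toList.head? = some 0) := by
    intro w
    simp only [hTs, Set.mem_setOf_eq, Tfin, Finset.mem_filter, mem_allW]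
    rw [show wtl w.toList = wt w from rfl]
  have hswapTs : ∀ w : FW, w ∈ Ts → swapW w ∉ Ts := by
    intro w hw hsw
    obtain ⟨-, -, hhd⟩ := (memTs w).1 hw
    obtain ⟨-, -, hhd'⟩ := (memTs _).1 hsw
    rw [toList_swapW, List.head?_map, hhd] at hhd'
    simp [sw] at hhd'
  have hswapmem : ∀ w : FW, w.toList.length = j+1 → wt w % 4 = 0 →
      w ∈ Ts ∨ swapW w ∈ Ts := by
    intro w hlen hwt
    rcases hl : w.toList with _ | ⟨a, l⟩
    · rw [hl] at hlen; simp at hlen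
    · have h01 : ∀ b : Fin 2, b = 0 ∨ b = 1 := by decide
      rcases h01 a with rfl | rfl
      · left
        rw [memTs]
        exact ⟨hlen, hwt, by rw [hl]; rfl⟩
      · right
        rw [memTs]
        refine ⟨by rw [length_swapW]; exact hlen, (wt_swapW_mod w).2 hwt, ?_⟩
        rw [toList_swapW, List.head?_map, hl]
        rfl
  -- Fintype
  have e : Ts ≃ {l : List (Fin 2) // l ∈ Tfin (j+1)} :=
    { toFun := fun w => ⟨(w : FW).toList, w.2⟩
      invFun := fun l => ⟨FreeMonoid.ofList l.1, by
        show (FreeMonoid.ofList l.1).toList ∈ Tfin (j+1)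
        rw [FreeMonoid.toList_ofList]; exact l.2⟩
      left_inv := fun w => Subtype.ext (FreeMonoid.ofList_toList _)
      right_inv := fun l => Subtype.ext rfl }
  letI : Fintype Ts := Fintype.ofEquiv _ e.symm
  have hcard : Fintype.card Ts = (Tfin (j+1)).card := by
    rw [Fintype.card_congr e, Fintype.card_coe]
  -- the restriction map
  set M : Submodule ℂ FA := (invAlg 4).toSubmodule ⊓ degComp (j+1) with hM
  let r : M →ₗ[ℂ] (Ts →₀ ℂ) :=
    (Finsupp.lsubtypeDomain (R := ℂ) Ts).comp ((MonoidAlgebra.coeffLinearEquiv ℂ).toLinearMap.comp (Submodule.subtype M))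
  have hr : ∀ (x : M) (t : Ts), r x t = (x : FA).coeff (t : FW) := by
    intro x t
    rfl
  have hinj : Function.Injective r := by
    rw [← LinearMap.ker_eq_bot, LinearMap.ker_eq_bot']
    intro x hx
    obtain ⟨hlen, hwt, hsym⟩ := (mem_M_iff (j+1) (x : FA)).1 x.2
    apply Subtype.ext
    ext w
    show (x : FA).coeff w = 0
    by_contra h0
    have hl : w.toList.length = j+1 := hlen w h0
    have hw4 : wt w % 4 = 0 := hwt w h0
    rcases hswapmem w hl hw4 with hmem | hmem
    · have h := DFunLike.congr_fun hx ⟨w, hmem⟩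
      rw [hr x ⟨w, hmem⟩] at h
      simp only [Finsupp.coe_zero, Pi.zero_apply] at h
      exact h0 h
    · have h := DFunLike.congr_fun hx ⟨swapW w, hmem⟩
      rw [hr x ⟨swapW w, hmem⟩] at h
      simp only [Finsupp.coe_zero, Pi.zero_apply] at h
      rw [hsym w] at h
      exact h0 h
  have hsurj : Function.Surjective r := by
    intro g
    let f1 : FA := MonoidAlgebra.ofCoeff (Finsupp.mapDomain (fun t : Ts => (t : FW)) g)
    let f2 : FA := MonoidAlgebra.ofCoeff (Finsupp.mapDomain (fun t : Ts => swapW (t : FW)) g)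
    have hi1 : Function.Injective (fun t : Ts => (t : FW)) := Subtype.val_injective
    have hi2 : Function.Injective (fun t : Ts => swapW (t : FW)) :=
      swapW_injective.comp Subtype.val_injective
    have hf1 : ∀ w : FW, f1.coeff w = if h : w ∈ Ts then g ⟨w, h⟩ else 0 := by
      intro w
      by_cases h : w ∈ Ts
      · rw [dif_pos h]
        exact Finsupp.mapDomain_apply hi1 g ⟨w, h⟩
      · rw [dif_neg h]
        apply Finsupp.mapDomain_notin_range
        rintro ⟨t, rfl⟩
        exact h t.2
    have hf2 : ∀ w : FW, f2.coeff w = if h : swapW w ∈ Ts then g ⟨swapW w, h⟩ else 0 := by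
      intro w
      by_cases h : swapW w ∈ Ts
      · rw [dif_pos h]
        have := Finsupp.mapDomain_apply hi2 g ⟨swapW w, h⟩
        simp only [swapW_swapW] at this
        exact this
      · rw [dif_neg h]
        apply Finsupp.mapDomain_notin_range
        rintro ⟨t, ht⟩
        apply h
        rw [← ht, swapW_swapW]
        exact t.2
    have hfapp : ∀ w : FW, (f1 + f2).coeff w =
        (if h : w ∈ Ts then g ⟨w, h⟩ else 0) +
        (if h : swapW w ∈ Ts then g ⟨swapW w, h⟩ else 0) := by
      intro w
      rw [MonoidAlgebra.coeff_add, Finsupp.add_apply, hf1, hf2]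
    have hmem : (f1 + f2) ∈ M := by
      rw [hM, mem_M_iff]
      refine ⟨?_, ?_, ?_⟩
      · intro w h0
        rw [hfapp] at h0
        by_cases h : w ∈ Ts
        · exact ((memTs w).1 h).1
        · rw [dif_neg h, zero_add] at h0
          by_cases h' : swapW w ∈ Ts
          · have := ((memTs _).1 h').1
            rwa [length_swapW] at this
          · rw [dif_neg h'] at h0; exact absurd rfl h0
      · intro w h0
        rw [hfapp] at h0
        by_cases h : w ∈ Ts
        · exact ((memTs w).1 h).2.1
        · rw [dif_neg h, zero_add] at h0
          by_cases h' : swapW w ∈ Ts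
          · exact (wt_swapW_mod w).1 ((memTs _).1 h').2.1
          · rw [dif_neg h'] at h0; exact absurd rfl h0
      · intro w
        rw [hfapp, hfapp]
        simp only [swapW_swapW]
        exact add_comm _ _
    refine ⟨⟨f1 + f2, hmem⟩, ?_⟩
    ext t
    rw [hr]
    show (f1 + f2).coeff (t : FW) = g t
    rw [hfapp, dif_pos t.2, dif_neg (hswapTs _ t.2), add_zero]
  have equiv : M ≃ₗ[ℂ] (Ts →₀ ℂ) := LinearEquiv.ofBijective r ⟨hinj, hsurj⟩
  rw [aDim, ← hM, equiv.finrank_eq, Module.finrank_finsupp_self, hcard, Tfin_card]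

lemma aDim_zero4 : aDim 4 0 = 1 := by
  classical
  set M : Submodule ℂ FA := (invAlg 4).toSubmodule ⊓ degComp 0 with hM
  let r : M →ₗ[ℂ] ℂ := (Finsupp.lapply (1 : FW)).comp ((MonoidAlgebra.coeffLinearEquiv ℂ).toLinearMap.comp (Submodule.subtype M))
  have hr : ∀ x : M, r x = (x : FA).coeff 1 := fun x => rfl
  have hinj : Function.Injective r := by
    rw [← LinearMap.ker_eq_bot, LinearMap.ker_eq_bot']
    intro x hx
    obtain ⟨hlen, -, -⟩ := (mem_M_iff 0 (x : FA)).1 x.2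
    apply Subtype.ext
    ext w
    show (x : FA).coeff w = 0
    by_contra h0
    have hw : w = 1 := FreeMonoid.length_eq_zero.1 (hlen w h0)
    rw [hw] at h0
    rw [hr] at hx
    exact h0 hx
  have hsurj : Function.Surjective r := by
    intro c
    have hmem : (MonoidAlgebra.single (1 : FW) c : FA) ∈ M := by
      rw [hM, mem_M_iff]
      have hne : ∀ w : FW, (MonoidAlgebra.single (1:FW) c : FA).coeff w ≠ 0 → w = 1 := by
        intro w h0
        by_contra hne
        rw [MonoidAlgebra.coeff_single, Finsupp.single_apply, if_neg (fun h => hne h.symm)] at h0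
        exact h0 rfl
      refine ⟨?_, ?_, ?_⟩
      · intro w h0
        rw [hne w h0]
        rfl
      · intro w h0
        rw [hne w h0]
        rfl
      · intro w
        simp only [MonoidAlgebra.coeff_single]
        rw [Finsupp.single_apply, Finsupp.single_apply]
        by_cases h : (1:FW) = w
        · rw [if_pos h, if_pos (by rw [← h]; rfl)]
        · rw [if_neg h, if_neg (fun hc => h (by
            have := congrArg swapW hc
            rwa [swapW_swapW, show swapW (1:FW) = 1 from rfl] at this))]
    refine ⟨⟨MonoidAlgebra.single (1:FW) c, hmem⟩, ?_⟩
    rw [hr]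
    show (MonoidAlgebra.single (1:FW) c : FA).coeff 1 = c
    rw [MonoidAlgebra.coeff_single, Finsupp.single_apply, if_pos rfl]
  have equiv : M ≃ₗ[ℂ] ℂ := LinearEquiv.ofBijective r ⟨hinj, hsurj⟩
  rw [aDim, ← hM, equiv.finrank_eq, Module.finrank_self]

lemma cnt_rec' (j : ℕ) : cnt (j+2) 3 = 4 * cnt j 3 := by
  rw [cnt_succ (j+1) 3 (by norm_num)]
  norm_num
  rw [← cnt_zero_two j, cnt_succ j 0 (by norm_num)]
  norm_num
  rw [cnt_one_three]
  omega

lemma cnt13 : cnt 1 3 = 1 := by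
  have h := cnt_succ 0 3 (by norm_num)
  norm_num at h
  rw [h, cnt_zero.2.2.1, cnt_zero.1]

/-- For `n = 4`: initial values and linear recurrence for the dimensions of the homogeneous
components of `ℂ⟨u,v⟩^{D₈}`. -/
theorem dihedral_invariants_recurrence_n4 :
    aDim 4 0 = 1 ∧ aDim 4 1 = 0 ∧ aDim 4 2 = 1 ∧ aDim 4 3 = 0 ∧
      ∀ m : ℕ, 1 ≤ m → aDim 4 (m + 2) = 4 * aDim 4 m := by
  refine ⟨aDim_zero4, ?_, ?_, ?_, ?_⟩
  · rw [show (1:ℕ) = 0+1 from rfl, aDim_succ, cnt_zero.2.2.2]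
  · rw [show (2:ℕ) = 1+1 from rfl, aDim_succ, cnt13]
  · rw [show (3:ℕ) = 2+1 from rfl, aDim_succ, cnt_rec' 0, cnt_zero.2.2.2]
  · intro m hm
    rcases m with _ | k
    · omega
    · rw [show k+1+2 = (k+2)+1 by omega, aDim_succ, cnt_rec', aDim_succ]

end
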